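/- Let d ≥ 2, m ≥ 1, and parameters p_i ≥ 0, λ_i > 1 (i = 1,…,m) with ∑_i p_i ≤ 1. Consider the channel W on output alphabet (Fin m × Fin d) ⊔ {z} given by W((i,y)|x) = p_i·(β_{λ_i} + η_{λ_i}·1{y = x}) and W(z|x) = 1 − ∑_i p_i, where β_λ = 1/(λ+d−1) and η_λ = (λ−1)/(λ+d−1). Assume S := ∑_i p_i η_{λ_i}² > 0. Fix n ≥ 1 and a deterministic input assignment x : Fin n → Fin d with empirical frequency vector θ ∈ ℝ^d, θ_a = (1/n)·#{t : x_t = a}, and let Y_1,…,Y_n be independent with Y_t ~ W(·|x_t). Let N_{(i,y)} count the users with output (i,y), M_i = ∑_y N_{(i,y)}, and define the estimator θ̃ = 𝟙/d + (1/S)·∑_{i=1}^m η_{λ_i}·(N^{(i)}/n − (M_i/(nd))·𝟙), where N^{(i)} = (N_{(i,1)},…,N_{(i,d)}). Then E[θ̃] = θ, θ̃ − θ lies in the sum-zero subspace, and E‖θ̃ − θ‖₂² = ((d−1)/(nd))·(1/S − 1), independent of θ. -/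

import Mathlib

open Finset BigOperators

namespace AGMR

variable {n : ℕ} {A : Type*} [Fintype A]

lemma prod_exp (Wr : Fin n → A → ℝ) :
    ∑ s : Fin n → A, ∏ t, Wr t (s t) = ∏ t, ∑ b, Wr t b := by
  classical
  rw [Finset.prod_univ_sum]
  simp [Fintype.piFinset_univ]

lemma split_one (t₀ : Fin n) (F G : Fin n → ℝ) (hFG : ∀ t, t ≠ t₀ → F t = G t) :
    ∏ t, F t = F t₀ * ∏ t ∈ univ.erase t₀, G t := by
  rw [← Finset.mul_prod_erase univ F (Finset.mem_univ t₀)]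
  exact congrArg _ (Finset.prod_congr rfl fun t ht => hFG t (Finset.mem_erase.mp ht).1)

lemma exp_single (Wr : Fin n → A → ℝ) (hrow : ∀ t, ∑ b, Wr t b = 1) (t₀ : Fin n)
    (g : A → ℝ) :
    ∑ s : Fin n → A, (∏ t, Wr t (s t)) * g (s t₀) = ∑ b, Wr t₀ b * g b := by
  classical
  set f : Fin n → A → ℝ := fun t b => if t = t₀ then Wr t b * g b else Wr t b with hf
  have h1 : ∀ s : Fin n → A, (∏ t, Wr t (s t)) * g (s t₀) = ∏ t, f t (s t) := by
    intro s
    rw [split_one t₀ (fun t => f t (s t)) (fun t => Wr t (s t)) (fun t ht => by simp [hf, ht]),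
      split_one t₀ (fun t => Wr t (s t)) (fun t => Wr t (s t)) (fun _ _ => rfl)]
    simp only [hf, if_pos rfl]
    ring
  rw [Finset.sum_congr rfl fun s _ => h1 s, prod_exp,
    split_one t₀ (fun t => ∑ b, f t b) (fun t => 1) (fun t ht => by simp [hf, ht, hrow t])]
  simp [hf]

lemma split_two (t₀ t₁ : Fin n) (hne : t₀ ≠ t₁) (F G : Fin n → ℝ)
    (hFG : ∀ t, t ≠ t₀ → t ≠ t₁ → F t = G t) :
    ∏ t, F t = F t₀ * F t₁ * ∏ t ∈ (univ.erase t₀).erase t₁, G t := by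
  rw [← Finset.mul_prod_erase univ F (Finset.mem_univ t₀),
    ← Finset.mul_prod_erase (univ.erase t₀) F
      (Finset.mem_erase.mpr ⟨hne.symm, Finset.mem_univ t₁⟩), ← mul_assoc]
  refine congrArg _ (Finset.prod_congr rfl fun t ht => ?_)
  have h1 := Finset.mem_erase.mp ht
  have h2 := Finset.mem_erase.mp h1.2
  exact hFG t h2.1 h1.1

lemma exp_pair (Wr : Fin n → A → ℝ) (hrow : ∀ t, ∑ b, Wr t b = 1) (t₀ t₁ : Fin n)
    (hne : t₀ ≠ t₁) (g h : A → ℝ) :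
    ∑ s : Fin n → A, (∏ t, Wr t (s t)) * (g (s t₀) * h (s t₁))
      = (∑ b, Wr t₀ b * g b) * (∑ b, Wr t₁ b * h b) := by
  classical
  set f : Fin n → A → ℝ :=
    fun t b => if t = t₀ then Wr t b * g b else if t = t₁ then Wr t b * h b else Wr t b with hf
  have h1 : ∀ s : Fin n → A, (∏ t, Wr t (s t)) * (g (s t₀) * h (s t₁)) = ∏ t, f t (s t) := by
    intro s
    rw [split_two t₀ t₁ hne (fun t => f t (s t)) (fun t => Wr t (s t))
        (fun t ht0 ht1 => by simp [hf, ht0, ht1]),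
      split_two t₀ t₁ hne (fun t => Wr t (s t)) (fun t => Wr t (s t)) (fun _ _ _ => rfl)]
    simp only [hf, if_pos rfl, if_neg hne, if_neg hne.symm, if_true]
    ring
  rw [Finset.sum_congr rfl fun s _ => h1 s, prod_exp,
    split_two t₀ t₁ hne (fun t => ∑ b, f t b) (fun t => 1)
      (fun t ht0 ht1 => by simp [hf, ht0, ht1, hrow t])]
  simp [hf, if_neg hne, if_neg hne.symm]

lemma exp_lincomb (Wr : Fin n → A → ℝ) (hrow : ∀ t, ∑ b, Wr t b = 1) (g : Fin n → A → ℝ) :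
    ∑ s : Fin n → A, (∏ t, Wr t (s t)) * (∑ t, g t (s t)) = ∑ t, ∑ b, Wr t b * g t b := by
  have h : ∀ s : Fin n → A, (∏ t, Wr t (s t)) * (∑ t, g t (s t))
      = ∑ t, (∏ t', Wr t' (s t')) * g t (s t) := fun s => Finset.mul_sum _ _ _
  rw [Finset.sum_congr rfl fun s _ => h s, Finset.sum_comm]
  exact Finset.sum_congr rfl fun t _ => exp_single Wr hrow t (g t)

lemma exp_quad (Wr : Fin n → A → ℝ) (hrow : ∀ t, ∑ b, Wr t b = 1) (g : Fin n → A → ℝ)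
    (hcent : ∀ t, ∑ b, Wr t b * g t b = 0) :
    ∑ s : Fin n → A, (∏ t, Wr t (s t)) * (∑ t, g t (s t))^2
      = ∑ t, ∑ b, Wr t b * (g t b)^2 := by
  classical
  have h : ∀ s : Fin n → A, (∏ t, Wr t (s t)) * (∑ t, g t (s t))^2
      = ∑ t, ∑ t', (∏ t'', Wr t'' (s t'')) * (g t (s t) * g t' (s t')) := by
    intro s
    rw [sq, Finset.sum_mul_sum, Finset.mul_sum]
    exact Finset.sum_congr rfl fun t _ => Finset.mul_sum _ _ _
  rw [Finset.sum_congr rfl fun s _ => h s, Finset.sum_comm]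
  refine Finset.sum_congr rfl fun t _ => ?_
  rw [Finset.sum_comm]
  have key : ∀ t' : Fin n, ∑ s : Fin n → A, (∏ t'', Wr t'' (s t'')) * (g t (s t) * g t' (s t'))
      = if t' = t then ∑ b, Wr t b * (g t b)^2 else 0 := by
    intro t'
    by_cases hc : t' = t
    · subst hc
      rw [if_pos rfl]
      have h2 := exp_single Wr hrow t' (fun b => g t' b * g t' b)
      simpa [sq] using h2
    · rw [if_neg hc, exp_pair Wr hrow t t' (fun hh => hc hh.symm) (g t) (g t'), hcent t,
        zero_mul]
  rw [Finset.sum_congr rfl fun t' _ => key t']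
  simp

noncomputable def phi (d m : ℕ) (η : Fin m → ℝ) (a : Fin d) : ((Fin m × Fin d) ⊕ Unit) → ℝ :=
  Sum.elim (fun iy => η iy.1 * ((if iy.2 = a then (1:ℝ) else 0) - 1/d)) (fun _ => 0)

@[simp] lemma phi_inl (d m : ℕ) (η : Fin m → ℝ) (a : Fin d) (iy : Fin m × Fin d) :
    phi d m η a (Sum.inl iy) = η iy.1 * ((if iy.2 = a then (1:ℝ) else 0) - 1/d) := rfl

@[simp] lemma phi_inr (d m : ℕ) (η : Fin m → ℝ) (a : Fin d) (u : Unit) :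
    phi d m η a (Sum.inr u) = 0 := rfl

lemma sum_pick {d : ℕ} (c : Fin d) (g : Fin d → ℝ) :
    ∑ y : Fin d, (if y = c then (1:ℝ) else 0) * g y = g c := by
  simp [ite_mul, Finset.sum_ite_eq']

lemma sum_center {d : ℕ} (hd : (d:ℝ) ≠ 0) (c : Fin d) :
    ∑ y : Fin d, ((if y = c then (1:ℝ) else 0) - 1/d) = 0 := by
  rw [Finset.sum_sub_distrib]
  simp [Finset.sum_ite_eq', Finset.card_univ]
  field_simp
  ring

lemma sum_center' {d : ℕ} (hd : (d:ℝ) ≠ 0) (c : Fin d) :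
    ∑ y : Fin d, ((if c = y then (1:ℝ) else 0) - 1/d) = 0 := by
  rw [Finset.sum_sub_distrib]
  simp [Finset.sum_ite_eq, Finset.card_univ]
  field_simp
  ring

lemma sum_sq {d : ℕ} (hd : (d:ℝ) ≠ 0) (c : Fin d) :
    ∑ y : Fin d, ((if y = c then (1:ℝ) else 0) - 1/d)^2 = 1 - 1/(d:ℝ) := by
  have h : ∀ y : Fin d, ((if y = c then (1:ℝ) else 0) - 1/d)^2
      = (if y = c then (1:ℝ) else 0) * (1 - 2/d) + 1/(d:ℝ)^2 := by
    intro y; split_ifs <;> ring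
  rw [Finset.sum_congr rfl fun y _ => h y, Finset.sum_add_distrib, ← Finset.sum_mul]
  simp [Finset.sum_ite_eq', Finset.card_univ]
  field_simp
  ring

lemma sum_sq' {d : ℕ} (hd : (d:ℝ) ≠ 0) (c : Fin d) :
    ∑ y : Fin d, ((if c = y then (1:ℝ) else 0) - 1/d)^2 = 1 - 1/(d:ℝ) := by
  have h : ∀ y : Fin d, ((if c = y then (1:ℝ) else 0) - 1/d)^2
      = ((if y = c then (1:ℝ) else 0) - 1/d)^2 := by
    intro y; rw [show (if c = y then (1:ℝ) else 0) = (if y = c then (1:ℝ) else 0) from by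
      by_cases h : y = c
      · subst h; rfl
      · rw [if_neg h, if_neg fun hh => h hh.symm]]
  rw [Finset.sum_congr rfl fun y _ => h y, sum_sq hd c]

end AGMR
theorem augmented_grr_mixture_risk (d m n : ℕ) (hd : 2 ≤ d) (hm : 1 ≤ m) (hn : 1 ≤ n)
    (p lam : Fin m → ℝ) (hp : ∀ i, 0 ≤ p i) (hlam : ∀ i, 1 < lam i)
    (hpsum : ∑ i, p i ≤ 1)
    (β η : Fin m → ℝ)
    (hβ : ∀ i, β i = 1 / (lam i + d - 1))
    (hη : ∀ i, η i = (lam i - 1) / (lam i + d - 1))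
    (S : ℝ) (hS : S = ∑ i, p i * (η i) ^ 2) (hSpos : 0 < S)
    (W : Fin d → ((Fin m × Fin d) ⊕ Unit) → ℝ)
    (hWin : ∀ x i y, W x (Sum.inl (i, y)) = p i * (β i + η i * (if y = x then 1 else 0)))
    (hWnull : ∀ x, W x (Sum.inr ()) = 1 - ∑ i, p i)
    (x : Fin n → Fin d)
    (θ : Fin d → ℝ)
    (hθ : ∀ a, θ a = ((Finset.univ.filter (fun t => x t = a)).card : ℝ) / n)
    (N : (Fin n → ((Fin m × Fin d) ⊕ Unit)) → Fin m → Fin d → ℕ)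
    (hN : ∀ s i y, N s i y = (Finset.univ.filter (fun t => s t = Sum.inl (i, y))).card)
    (M : (Fin n → ((Fin m × Fin d) ⊕ Unit)) → Fin m → ℕ)
    (hM : ∀ s i, M s i = ∑ y, N s i y)
    (est : (Fin n → ((Fin m × Fin d) ⊕ Unit)) → Fin d → ℝ)
    (hest : ∀ s a, est s a = 1 / (d : ℝ) +
        (1 / S) * ∑ i, η i * ((N s i a : ℝ) / n - (M s i : ℝ) / (n * d))) :
    -- unbiasedness
    (∀ a, ∑ s : Fin n → ((Fin m × Fin d) ⊕ Unit), (∏ t, W (x t) (s t)) * est s a = θ a)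
    -- θ̃ − θ lies in the sum-zero subspace
    ∧ (∀ s : Fin n → ((Fin m × Fin d) ⊕ Unit), ∑ a, (est s a - θ a) = 0)
    -- exact fixed-composition risk
    ∧ (∑ s : Fin n → ((Fin m × Fin d) ⊕ Unit),
          (∏ t, W (x t) (s t)) * ∑ a, (est s a - θ a) ^ 2
        = ((d : ℝ) - 1) / (n * d) * (1 / S - 1)) := by
  classical
  have hd0 : (d:ℝ) ≠ 0 := Nat.cast_ne_zero.mpr (by omega)
  have hn0 : (n:ℝ) ≠ 0 := Nat.cast_ne_zero.mpr (by omega)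
  have hS0 : S ≠ 0 := ne_of_gt hSpos
  have hβη : ∀ i, (d:ℝ) * β i + η i = 1 := by
    intro i
    have h1 : (1:ℝ) < lam i := hlam i
    have h2 : (2:ℝ) ≤ (d:ℝ) := by exact_mod_cast hd
    have h3 : lam i + d - 1 ≠ 0 := by linarith
    rw [hβ i, hη i]
    field_simp
    ring
  have hrow : ∀ t, ∑ b : (Fin m × Fin d) ⊕ Unit, W (x t) b = 1 := by
    intro t
    rw [Fintype.sum_sum_type, Fintype.sum_prod_type]
    have hone : ∑ y : Fin d, (if y = x t then (1:ℝ) else 0) = 1 := by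
      rw [Finset.sum_ite_eq']; simp
    have h1 : ∀ i : Fin m, ∑ y : Fin d, W (x t) (Sum.inl (i, y)) = p i := by
      intro i
      have h2 : ∀ y : Fin d, W (x t) (Sum.inl (i, y))
          = p i * β i + p i * η i * (if y = x t then (1:ℝ) else 0) := by
        intro y; rw [hWin]; ring
      rw [Finset.sum_congr rfl fun y _ => h2 y, Finset.sum_add_distrib]
      have e1 : ∑ _y : Fin d, p i * β i = (d:ℝ) * (p i * β i) := by
        rw [Finset.sum_const, Finset.card_univ, Fintype.card_fin, nsmul_eq_mul]
      have e2 : ∑ y : Fin d, p i * η i * (if y = x t then (1:ℝ) else 0) = p i * η i := by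
        rw [← Finset.mul_sum, hone, mul_one]
      rw [e1, e2]
      linear_combination p i * hβη i
    rw [Finset.sum_congr rfl fun i _ => h1 i]
    simp [hWnull]
  have hzero : ∀ t a, ∑ u : Unit, W (x t) (Sum.inr u) * AGMR.phi d m η a (Sum.inr u) = 0 := by
    intro t a; simp
  have Eφ : ∀ (t : Fin n) (a : Fin d),
      ∑ b : (Fin m × Fin d) ⊕ Unit, W (x t) b * AGMR.phi d m η a b
        = S * ((if x t = a then (1:ℝ) else 0) - 1/(d:ℝ)) := by
    intro t a
    rw [Fintype.sum_sum_type, Fintype.sum_prod_type, hzero t a, add_zero]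
    have h1 : ∀ i : Fin m,
        ∑ y : Fin d, W (x t) (Sum.inl (i, y)) * AGMR.phi d m η a (Sum.inl (i, y))
          = p i * η i^2 * ((if x t = a then (1:ℝ) else 0) - 1/(d:ℝ)) := by
      intro i
      have h2 : ∀ y : Fin d, W (x t) (Sum.inl (i, y)) * AGMR.phi d m η a (Sum.inl (i, y))
          = (p i * β i * η i) * ((if y = a then (1:ℝ) else 0) - 1/(d:ℝ))
            + (p i * η i^2) * ((if y = x t then (1:ℝ) else 0)
                * ((if y = a then (1:ℝ) else 0) - 1/(d:ℝ))) := by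
        intro y; rw [hWin, AGMR.phi_inl]; ring
      rw [Finset.sum_congr rfl fun y _ => h2 y, Finset.sum_add_distrib, ← Finset.mul_sum,
        ← Finset.mul_sum, AGMR.sum_center hd0 a,
        AGMR.sum_pick (x t) (fun y => (if y = a then (1:ℝ) else 0) - 1/(d:ℝ))]
      ring
    rw [Finset.sum_congr rfl fun i _ => h1 i, ← Finset.sum_mul, ← hS]
  have Eφsq : ∀ (t : Fin n) (a : Fin d),
      ∑ b : (Fin m × Fin d) ⊕ Unit, W (x t) b * (AGMR.phi d m η a b)^2
        = ∑ i, p i * η i^2 * (β i * (1 - 1/(d:ℝ))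
            + η i * ((if x t = a then (1:ℝ) else 0) - 1/(d:ℝ))^2) := by
    intro t a
    have hz2 : ∑ u : Unit, W (x t) (Sum.inr u) * (AGMR.phi d m η a (Sum.inr u))^2 = 0 := by simp
    rw [Fintype.sum_sum_type, Fintype.sum_prod_type, hz2, add_zero]
    refine Finset.sum_congr rfl fun i _ => ?_
    have h2 : ∀ y : Fin d, W (x t) (Sum.inl (i, y)) * (AGMR.phi d m η a (Sum.inl (i, y)))^2
        = (p i * β i * η i^2) * ((if y = a then (1:ℝ) else 0) - 1/(d:ℝ))^2
          + (p i * η i^2 * η i) * ((if y = x t then (1:ℝ) else 0)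
              * ((if y = a then (1:ℝ) else 0) - 1/(d:ℝ))^2) := by
      intro y; rw [hWin, AGMR.phi_inl]; ring
    rw [Finset.sum_congr rfl fun y _ => h2 y, Finset.sum_add_distrib, ← Finset.mul_sum,
      ← Finset.mul_sum, AGMR.sum_sq hd0 a,
      AGMR.sum_pick (x t) (fun y => ((if y = a then (1:ℝ) else 0) - 1/(d:ℝ))^2)]
    ring
  have hsumφ : ∀ b : (Fin m × Fin d) ⊕ Unit, ∑ a, AGMR.phi d m η a b = 0 := by
    intro b
    cases b with
    | inl iy =>
        have : ∀ a : Fin d, AGMR.phi d m η a (Sum.inl iy)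
            = η iy.1 * ((if iy.2 = a then (1:ℝ) else 0) - 1/(d:ℝ)) := fun a => rfl
        rw [Finset.sum_congr rfl fun a _ => this a, ← Finset.mul_sum,
          AGMR.sum_center' hd0 iy.2, mul_zero]
    | inr u => simp
  have hsumμ : ∀ t : Fin n, ∑ a, S * ((if x t = a then (1:ℝ) else 0) - 1/(d:ℝ)) = 0 := by
    intro t
    rw [← Finset.mul_sum, AGMR.sum_center' hd0 (x t), mul_zero]
  have hφ_eq : ∀ (a : Fin d) (b : (Fin m × Fin d) ⊕ Unit), AGMR.phi d m η a b
      = ∑ i, η i * ((if b = Sum.inl (i, a) then (1:ℝ) else 0)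
          - (∑ y, if b = Sum.inl (i, y) then (1:ℝ) else 0)/(d:ℝ)) := by
    intro a b
    cases b with
    | inr u => simp
    | inl jy =>
        obtain ⟨j, y⟩ := jy
        have hz : ∀ i : Fin m, i ∈ (univ : Finset (Fin m)) → i ≠ j →
            η i * ((if (Sum.inl (j, y) : (Fin m × Fin d) ⊕ Unit) = Sum.inl (i, a)
                then (1:ℝ) else 0)
              - (∑ y', if (Sum.inl (j, y) : (Fin m × Fin d) ⊕ Unit) = Sum.inl (i, y')
                  then (1:ℝ) else 0)/(d:ℝ)) = 0 := by
          intro i _ hij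
          have hne : ∀ y' : Fin d,
              (Sum.inl (j, y) : (Fin m × Fin d) ⊕ Unit) ≠ Sum.inl (i, y') := by
            intro y' h
            exact hij ((Prod.mk.injEq _ _ _ _).mp (Sum.inl.inj h)).1.symm
          simp [hne]
        rw [Finset.sum_eq_single j hz (fun h => absurd (Finset.mem_univ j) h)]
        simp
  have hφsum : ∀ (s : Fin n → (Fin m × Fin d) ⊕ Unit) (a : Fin d),
      ∑ t, AGMR.phi d m η a (s t) = ∑ i, η i * ((N s i a : ℝ) - (M s i : ℝ)/(d:ℝ)) := by
    intro s a
    rw [Finset.sum_congr rfl fun t _ => hφ_eq a (s t), Finset.sum_comm]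
    refine Finset.sum_congr rfl fun i _ => ?_
    rw [← Finset.mul_sum]
    congr 1
    rw [Finset.sum_sub_distrib]
    congr 1
    · rw [Finset.sum_boole, hN]
    · rw [← Finset.sum_div]
      congr 1
      rw [Finset.sum_comm, hM]
      push_cast
      exact Finset.sum_congr rfl fun y _ => by rw [Finset.sum_boole, hN]
  have hcount : ∀ a : Fin d, ∑ t, (if x t = a then (1:ℝ) else 0)
      = ((univ.filter (fun t => x t = a)).card : ℝ) := fun a => Finset.sum_boole _ _
  have F1 : ∀ (s : Fin n → (Fin m × Fin d) ⊕ Unit) (a : Fin d),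
      est s a - θ a = (1/((n:ℝ)*S)) * ∑ t, (AGMR.phi d m η a (s t)
        - S * ((if x t = a then (1:ℝ) else 0) - 1/(d:ℝ))) := by
    intro s a
    rw [Finset.sum_sub_distrib, hφsum s a, ← Finset.mul_sum, Finset.sum_sub_distrib,
      hcount a, Finset.sum_const, Finset.card_univ, Fintype.card_fin, nsmul_eq_mul,
      hest, hθ]
    have hlin : ∑ i, η i * ((N s i a : ℝ)/(n:ℝ) - (M s i : ℝ)/((n:ℝ)*(d:ℝ)))
        = (1/(n:ℝ)) * ∑ i, η i * ((N s i a : ℝ) - (M s i : ℝ)/(d:ℝ)) := by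
      rw [Finset.mul_sum]
      refine Finset.sum_congr rfl fun i _ => ?_
      field_simp
    rw [hlin]
    field_simp
    ring
  have Eψ0 : ∀ (t : Fin n) (a : Fin d),
      ∑ b : (Fin m × Fin d) ⊕ Unit, W (x t) b * (AGMR.phi d m η a b
        - S * ((if x t = a then (1:ℝ) else 0) - 1/(d:ℝ))) = 0 := by
    intro t a
    have h1 : ∀ b : (Fin m × Fin d) ⊕ Unit, W (x t) b * (AGMR.phi d m η a b
        - S * ((if x t = a then (1:ℝ) else 0) - 1/(d:ℝ)))
        = W (x t) b * AGMR.phi d m η a b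
          - (S * ((if x t = a then (1:ℝ) else 0) - 1/(d:ℝ))) * W (x t) b := by
      intro b; ring
    rw [Finset.sum_congr rfl fun b _ => h1 b, Finset.sum_sub_distrib, Eφ t a,
      ← Finset.mul_sum, hrow t, mul_one, sub_self]
  have Eψsq : ∀ t : Fin n,
      ∑ a, ∑ b : (Fin m × Fin d) ⊕ Unit, W (x t) b * (AGMR.phi d m η a b
        - S * ((if x t = a then (1:ℝ) else 0) - 1/(d:ℝ)))^2
      = (1 - 1/(d:ℝ)) * (S - S^2) := by
    intro t
    have h1 : ∀ a : Fin d, ∑ b : (Fin m × Fin d) ⊕ Unit, W (x t) b * (AGMR.phi d m η a b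
          - S * ((if x t = a then (1:ℝ) else 0) - 1/(d:ℝ)))^2
        = (∑ b : (Fin m × Fin d) ⊕ Unit, W (x t) b * (AGMR.phi d m η a b)^2)
          - (S * ((if x t = a then (1:ℝ) else 0) - 1/(d:ℝ)))^2 := by
      intro a
      have h2 : ∀ b : (Fin m × Fin d) ⊕ Unit, W (x t) b * (AGMR.phi d m η a b
            - S * ((if x t = a then (1:ℝ) else 0) - 1/(d:ℝ)))^2
          = W (x t) b * (AGMR.phi d m η a b)^2
            - (2 * (S * ((if x t = a then (1:ℝ) else 0) - 1/(d:ℝ))))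
                * (W (x t) b * AGMR.phi d m η a b)
            + (S * ((if x t = a then (1:ℝ) else 0) - 1/(d:ℝ)))^2 * W (x t) b := by
        intro b; ring
      rw [Finset.sum_congr rfl fun b _ => h2 b, Finset.sum_add_distrib,
        Finset.sum_sub_distrib, ← Finset.mul_sum, ← Finset.mul_sum, Eφ t a, hrow t, mul_one]
      ring
    rw [Finset.sum_congr rfl fun a _ => h1 a, Finset.sum_sub_distrib,
      Finset.sum_congr rfl fun a _ => Eφsq t a, Finset.sum_comm]
    have h3 : ∀ i : Fin m, ∑ a, p i * η i^2 * (β i * (1 - 1/(d:ℝ))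
          + η i * ((if x t = a then (1:ℝ) else 0) - 1/(d:ℝ))^2)
        = p i * η i^2 * (1 - 1/(d:ℝ)) := by
      intro i
      rw [← Finset.mul_sum, Finset.sum_add_distrib, Finset.sum_const, Finset.card_univ,
        Fintype.card_fin, ← Finset.mul_sum, AGMR.sum_sq' hd0 (x t), nsmul_eq_mul]
      linear_combination (p i * η i ^ 2 * (1 - 1/(d:ℝ))) * hβη i
    have h4 : ∑ a, (S * ((if x t = a then (1:ℝ) else 0) - 1/(d:ℝ)))^2
        = S^2 * (1 - 1/(d:ℝ)) := by
      have h5 : ∀ a : Fin d, (S * ((if x t = a then (1:ℝ) else 0) - 1/(d:ℝ)))^2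
          = S^2 * ((if x t = a then (1:ℝ) else 0) - 1/(d:ℝ))^2 := fun a => by ring
      rw [Finset.sum_congr rfl fun a _ => h5 a, ← Finset.mul_sum, AGMR.sum_sq' hd0 (x t)]
    rw [Finset.sum_congr rfl fun i _ => h3 i, ← Finset.sum_mul, ← hS, h4]
    ring
  have E1 : ∑ s : Fin n → (Fin m × Fin d) ⊕ Unit, ∏ t, W (x t) (s t) = 1 := by
    rw [AGMR.prod_exp]
    exact Finset.prod_eq_one fun t _ => hrow t
  refine ⟨?_, ?_, ?_⟩
  · intro a
    have h1 : ∀ s : Fin n → (Fin m × Fin d) ⊕ Unit, (∏ t, W (x t) (s t)) * est s a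
        = (∏ t, W (x t) (s t)) * θ a
          + (1/((n:ℝ)*S)) * ((∏ t, W (x t) (s t)) * ∑ t, (AGMR.phi d m η a (s t)
              - S * ((if x t = a then (1:ℝ) else 0) - 1/(d:ℝ)))) := by
      intro s
      have h2 := F1 s a
      have h3 : est s a = θ a + (1/((n:ℝ)*S)) * ∑ t, (AGMR.phi d m η a (s t)
          - S * ((if x t = a then (1:ℝ) else 0) - 1/(d:ℝ))) := by linarith
      rw [h3]; ring
    rw [Finset.sum_congr rfl fun s _ => h1 s, Finset.sum_add_distrib, ← Finset.sum_mul, E1,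
      one_mul, ← Finset.mul_sum,
      AGMR.exp_lincomb (fun t => W (x t)) hrow
        (fun t b => AGMR.phi d m η a b - S * ((if x t = a then (1:ℝ) else 0) - 1/(d:ℝ))),
      Finset.sum_congr rfl fun t _ => Eψ0 t a, Finset.sum_const]
    simp
  · intro s
    rw [Finset.sum_congr rfl fun a _ => F1 s a, ← Finset.mul_sum, Finset.sum_comm]
    have hz : ∀ t : Fin n, ∑ a, (AGMR.phi d m η a (s t)
        - S * ((if x t = a then (1:ℝ) else 0) - 1/(d:ℝ))) = 0 := by
      intro t
      rw [Finset.sum_sub_distrib, hsumφ (s t), hsumμ t, sub_zero]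
    rw [Finset.sum_congr rfl fun t _ => hz t, Finset.sum_const]
    simp
  · have h1 : ∀ s : Fin n → (Fin m × Fin d) ⊕ Unit,
        (∏ t, W (x t) (s t)) * ∑ a, (est s a - θ a)^2
        = ∑ a, (1/((n:ℝ)*S))^2 * ((∏ t, W (x t) (s t)) * (∑ t, (AGMR.phi d m η a (s t)
            - S * ((if x t = a then (1:ℝ) else 0) - 1/(d:ℝ))))^2) := by
      intro s
      rw [Finset.mul_sum]
      refine Finset.sum_congr rfl fun a _ => ?_
      rw [F1 s a, mul_pow]
      ring
    rw [Finset.sum_congr rfl fun s _ => h1 s, Finset.sum_comm]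
    have h2 : ∀ a : Fin d, ∑ s : Fin n → (Fin m × Fin d) ⊕ Unit,
        (1/((n:ℝ)*S))^2 * ((∏ t, W (x t) (s t)) * (∑ t, (AGMR.phi d m η a (s t)
            - S * ((if x t = a then (1:ℝ) else 0) - 1/(d:ℝ))))^2)
        = (1/((n:ℝ)*S))^2 * ∑ t, ∑ b : (Fin m × Fin d) ⊕ Unit,
            W (x t) b * (AGMR.phi d m η a b
              - S * ((if x t = a then (1:ℝ) else 0) - 1/(d:ℝ)))^2 := by
      intro a
      rw [← Finset.mul_sum,
        AGMR.exp_quad (fun t => W (x t)) hrow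
          (fun t b => AGMR.phi d m η a b - S * ((if x t = a then (1:ℝ) else 0) - 1/(d:ℝ)))
          (fun t => Eψ0 t a)]
    rw [Finset.sum_congr rfl fun a _ => h2 a, ← Finset.mul_sum, Finset.sum_comm,
      Finset.sum_congr rfl fun t _ => Eψsq t, Finset.sum_const, Finset.card_univ,
      Fintype.card_fin, nsmul_eq_mul]
    field_simp
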